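/- Let A ⊂ ℝⁿ be measurable, x a point of Lebesgue density 1 of A, and ζ ∈ ℝⁿ with ζ ≠ 0. Then the cone C = {x + tv : t > 0, |v| = 1, ⟨ζ, v⟩ ≤ −|ζ|/2} satisfies liminf_{r→0⁺} Lᵑ(A ∩ C ∩ B(x,r))/Lᵑ(B(x,r)) > 0; in particular there is a sequence in A ∩ C converging to x. -/

import Mathlib

open MeasureTheory Filter Metric
open scoped RealInnerProductSpace Pointwise ENNReal

theorem cone_positive_density (n : ℕ) (A : Set (EuclideanSpace ℝ (Fin n)))
    (hA : MeasurableSet A) (x : EuclideanSpace ℝ (Fin n))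
    (hx : Tendsto (fun r : ℝ => volume (A ∩ closedBall x r) / volume (closedBall x r))
      (nhdsWithin 0 (Set.Ioi 0)) (nhds 1))
    (ζ : EuclideanSpace ℝ (Fin n)) (hζ : ζ ≠ 0)
    (C : Set (EuclideanSpace ℝ (Fin n)))
    (hC : C = {y | ∃ t : ℝ, 0 < t ∧ ∃ v : EuclideanSpace ℝ (Fin n),
      ‖v‖ = 1 ∧ ⟪ζ, v⟫ ≤ -‖ζ‖ / 2 ∧ y = x + t • v}) :
    (0 < liminf (fun r : ℝ => volume (A ∩ C ∩ closedBall x r) / volume (closedBall x r))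
        (nhdsWithin 0 (Set.Ioi 0))) ∧
      ∃ u : ℕ → EuclideanSpace ℝ (Fin n), (∀ k, u k ∈ A ∩ C) ∧
        Tendsto u atTop (nhds x) := by
  classical
  have hζpos : (0:ℝ) < ‖ζ‖ := norm_pos_iff.mpr hζ
  set S : Set (EuclideanSpace ℝ (Fin n)) :=
    {z | ⟪ζ, z⟫ ≤ -(‖ζ‖ * ‖z‖) / 2 ∧ z ≠ 0} with hSdef
  -- membership characterization
  have hmem : ∀ y, y ∈ C ↔ y - x ∈ S := by
    intro y
    rw [hC]
    constructor
    · rintro ⟨t, ht, v, hv, hiv, rfl⟩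
      have h1 : x + t • v - x = t • v := by abel
      rw [h1]
      have hnorm : ‖t • v‖ = t := by
        rw [norm_smul, hv, Real.norm_eq_abs, abs_of_pos ht, mul_one]
      constructor
      · rw [real_inner_smul_right, hnorm]
        nlinarith
      · intro h
        rw [h, norm_zero] at hnorm
        exact ht.ne hnorm
    · rintro ⟨h1, h2⟩
      have hy : y - x ≠ 0 := h2
      have hn : (0:ℝ) < ‖y - x‖ := norm_pos_iff.mpr hy
      refine ⟨‖y - x‖, hn, ‖y - x‖⁻¹ • (y - x), norm_smul_inv_norm hy, ?_, ?_⟩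
      · rw [real_inner_smul_right]
        calc ‖y - x‖⁻¹ * ⟪ζ, y - x⟫
            ≤ ‖y - x‖⁻¹ * (-(‖ζ‖ * ‖y - x‖) / 2) :=
              mul_le_mul_of_nonneg_left h1 (inv_nonneg.mpr hn.le)
          _ = -‖ζ‖ / 2 := by field_simp
      · rw [smul_smul, mul_inv_cancel₀ hn.ne', one_smul]
        abel
  -- cone property of S
  have hcone : ∀ (c : ℝ), 0 < c → ∀ z ∈ S, c • z ∈ S := by
    rintro c hc z ⟨h1, h2⟩
    have hnorm : ‖c • z‖ = c * ‖z‖ := by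
      rw [norm_smul, Real.norm_eq_abs, abs_of_pos hc]
    refine ⟨?_, smul_ne_zero hc.ne' h2⟩
    rw [real_inner_smul_right, hnorm]
    nlinarith
  have hconeiff : ∀ (c : ℝ), 0 < c → ∀ z, (z ∈ S ↔ c • z ∈ S) := by
    intro c hc z
    refine ⟨hcone c hc z, fun h => ?_⟩
    have := hcone c⁻¹ (inv_pos.mpr hc) _ h
    rwa [smul_smul, inv_mul_cancel₀ hc.ne', one_smul] at this
  -- scaling identity
  have hscale : ∀ r : ℝ, 0 < r →
      C ∩ closedBall x r = (fun y => y + (-x)) ⁻¹' (r • (S ∩ closedBall 0 1)) := by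
    intro r hr
    ext y
    rw [Set.mem_inter_iff, hmem y, Set.mem_preimage,
      Set.mem_smul_set_iff_inv_smul_mem₀ hr.ne']
    have hyx : y + -x = y - x := by abel
    rw [hyx, Set.mem_inter_iff]
    constructor
    · rintro ⟨h1, h2⟩
      refine ⟨(hconeiff r⁻¹ (inv_pos.mpr hr) _).mp h1, ?_⟩
      rw [mem_closedBall, dist_zero_right, norm_smul, Real.norm_eq_abs,
        abs_of_pos (inv_pos.mpr hr)]
      rw [mem_closedBall, dist_eq_norm] at h2
      rw [inv_mul_le_one₀ hr]
      exact h2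
    · rintro ⟨h1, h2⟩
      refine ⟨(hconeiff r⁻¹ (inv_pos.mpr hr) _).mpr h1, ?_⟩
      rw [mem_closedBall, dist_zero_right, norm_smul, Real.norm_eq_abs,
        abs_of_pos (inv_pos.mpr hr)] at h2
      rw [mem_closedBall, dist_eq_norm]
      rw [inv_mul_le_one₀ hr] at h2
      exact h2
  -- measurability
  have hinner_cont : Continuous fun z : EuclideanSpace ℝ (Fin n) => ⟪ζ, z⟫ :=
    continuous_const.inner continuous_id
  have hSmeas : MeasurableSet S := by
    have h1 : MeasurableSet {z : EuclideanSpace ℝ (Fin n) | ⟪ζ, z⟫ ≤ -(‖ζ‖ * ‖z‖) / 2} :=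
      measurableSet_le hinner_cont.measurable
        (((continuous_const.mul continuous_norm).neg.div_const 2).measurable)
    have : S = {z : EuclideanSpace ℝ (Fin n) | ⟪ζ, z⟫ ≤ -(‖ζ‖ * ‖z‖) / 2} ∩ {(0:EuclideanSpace ℝ (Fin n))}ᶜ := by
      ext z; simp [hSdef, Set.mem_setOf_eq, and_comm]
    rw [this]
    exact h1.inter (MeasurableSet.singleton 0).compl
  have hCmeas : MeasurableSet C := by
    have hCp : C = (fun y => y - x) ⁻¹' S := Set.ext fun y => hmem y
    rw [hCp]
    exact hSmeas.preimage (measurable_id.sub measurable_const)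
  -- positivity of the cone slice measure
  set m : ℝ≥0∞ := volume (S ∩ closedBall (0:EuclideanSpace ℝ (Fin n)) 1) with hmdef
  have hmpos : 0 < m := by
    set U : Set (EuclideanSpace ℝ (Fin n)) :=
      {z | ⟪ζ, z⟫ < -(‖ζ‖ * ‖z‖) / 2} ∩ ball 0 1 with hUdef
    have hUopen : IsOpen U :=
      (isOpen_lt hinner_cont ((continuous_const.mul continuous_norm).neg.div_const 2)).inter
        isOpen_ball
    have hUsub : U ⊆ S ∩ closedBall 0 1 := by
      rintro z ⟨h1, h2⟩
      refine ⟨⟨le_of_lt h1, ?_⟩, ball_subset_closedBall h2⟩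
      rintro rfl
      simp at h1
    have hUne : U.Nonempty := by
      refine ⟨(2 * ‖ζ‖)⁻¹ • (-ζ), ?_, ?_⟩
      · have hnorm : ‖(2 * ‖ζ‖)⁻¹ • (-ζ)‖ = (1:ℝ)/2 := by
          rw [norm_smul, Real.norm_eq_abs, norm_neg,
            abs_of_pos (by positivity : (0:ℝ) < (2 * ‖ζ‖)⁻¹)]
          field_simp
        rw [Set.mem_setOf_eq, hnorm, real_inner_smul_right, inner_neg_right,
          real_inner_self_eq_norm_sq]
        rw [show ((2:ℝ) * ‖ζ‖)⁻¹ * -‖ζ‖ ^ 2 = -(‖ζ‖/2) by field_simp]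
        nlinarith
      · rw [mem_ball, dist_zero_right, norm_smul, Real.norm_eq_abs, norm_neg,
          abs_of_pos (by positivity : (0:ℝ) < (2 * ‖ζ‖)⁻¹)]
        rw [show ((2:ℝ) * ‖ζ‖)⁻¹ * ‖ζ‖ = 1/2 by field_simp]
        norm_num
    exact (hUopen.measure_pos volume hUne).trans_le (measure_mono hUsub)
  -- basic measure facts
  set B1 : ℝ≥0∞ := volume (closedBall (0:EuclideanSpace ℝ (Fin n)) 1) with hB1def
  have hB1pos : 0 < B1 := measure_closedBall_pos volume 0 one_pos
  have hB1top : B1 ≠ ⊤ := measure_closedBall_lt_top.ne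
  have hmle : m ≤ B1 := measure_mono Set.inter_subset_right
  set c : ℝ≥0∞ := m / B1 with hcdef
  have hcpos : 0 < c := ENNReal.div_pos hmpos.ne' hB1top
  have hcle1 : c ≤ 1 := by
    rw [hcdef, ENNReal.div_le_iff_le_mul (Or.inl hB1pos.ne') (Or.inl hB1top), one_mul]
    exact hmle
  have hc2pos : 0 < c / 2 := ENNReal.div_pos hcpos.ne' (by norm_num)
  have hc2le1 : c / 2 ≤ 1 := le_trans ENNReal.half_le_self hcle1
  have hvolC : ∀ r : ℝ, 0 < r →
      volume (C ∩ closedBall x r) = ENNReal.ofReal (r ^ n) * m := by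
    intro r hr
    rw [hscale r hr, measure_preimage_add_right volume (-x) _,
      Measure.addHaar_smul_of_nonneg volume hr.le, finrank_euclideanSpace_fin]
  have hvolB : ∀ r : ℝ, 0 < r →
      volume (closedBall x r) = ENNReal.ofReal (r ^ n) * B1 := by
    intro r hr
    rw [Measure.addHaar_closedBall' volume x hr.le, finrank_euclideanSpace_fin]
  have hblt : 1 - c/2 < 1 := ENNReal.sub_lt_self ENNReal.one_ne_top one_ne_zero hc2pos.ne'
  have hev : ∀ᶠ r in nhdsWithin (0:ℝ) (Set.Ioi 0),
      c / 2 ≤ volume (A ∩ C ∩ closedBall x r) / volume (closedBall x r) := by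
    filter_upwards [hx.eventually (eventually_gt_nhds hblt), self_mem_nhdsWithin] with r hg hr
    replace hr : (0:ℝ) < r := hr
    set V := volume (closedBall x r) with hVdef
    have hV0 : V ≠ 0 := (measure_closedBall_pos volume x hr).ne'
    have hVtop : V ≠ ⊤ := measure_closedBall_lt_top.ne
    have hCV : volume (C ∩ closedBall x r) = c * V := by
      rw [hvolC r hr, hVdef, hvolB r hr, hcdef]
      calc ENNReal.ofReal (r^n) * m = ENNReal.ofReal (r^n) * (m / B1 * B1) := by
            rw [ENNReal.div_mul_cancel hB1pos.ne' hB1top]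
        _ = m / B1 * (ENNReal.ofReal (r^n) * B1) := by ring
    have hAB : (1 - c/2) * V ≤ volume (A ∩ closedBall x r) := by
      rw [← ENNReal.le_div_iff_mul_le (Or.inl hV0) (Or.inl hVtop)]
      exact hg.le
    have hIE := measure_union_add_inter (μ := volume) (t := C ∩ closedBall x r)
      (A ∩ closedBall x r) (hCmeas.inter measurableSet_closedBall)
    have hinterEq : (A ∩ closedBall x r) ∩ (C ∩ closedBall x r) = A ∩ C ∩ closedBall x r := by
      ext z
      simp only [Set.mem_inter_iff]
      tauto
    have hunion : volume ((A ∩ closedBall x r) ∪ (C ∩ closedBall x r)) ≤ V :=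
      measure_mono (Set.union_subset Set.inter_subset_right Set.inter_subset_right)
    have hkey : (1 - c/2) * V + c * V ≤ V + volume (A ∩ C ∩ closedBall x r) := by
      calc (1 - c/2) * V + c * V
          ≤ volume (A ∩ closedBall x r) + volume (C ∩ closedBall x r) := by
            rw [hCV]; exact add_le_add_left hAB _
        _ = volume ((A ∩ closedBall x r) ∪ (C ∩ closedBall x r))
            + volume (A ∩ C ∩ closedBall x r) := by rw [← hinterEq, hIE]
        _ ≤ V + volume (A ∩ C ∩ closedBall x r) := add_le_add_left hunion _
    have hsum : (1 - c/2) + c = 1 + c/2 := by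
      calc (1 - c/2) + c = (1 - c/2) + (c/2 + c/2) := by rw [ENNReal.add_halves]
        _ = ((1 - c/2) + c/2) + c/2 := by rw [add_assoc]
        _ = 1 + c/2 := by rw [tsub_add_cancel_of_le hc2le1]
    rw [← add_mul, hsum, add_mul, one_mul] at hkey
    rw [ENNReal.le_div_iff_mul_le (Or.inl hV0) (Or.inl hVtop)]
    exact (ENNReal.add_le_add_iff_left hVtop).mp hkey
  have hlim : c/2 ≤ liminf (fun r : ℝ => volume (A ∩ C ∩ closedBall x r)
      / volume (closedBall x r)) (nhdsWithin 0 (Set.Ioi 0)) := by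
    have h := Filter.liminf_le_liminf hev
    rwa [Filter.liminf_const] at h
  refine ⟨lt_of_lt_of_le hc2pos hlim, ?_⟩
  have hfreq : ∀ ε : ℝ, 0 < ε → ∃ y, y ∈ A ∩ C ∧ dist y x ≤ ε := by
    intro ε hε
    have h2 : Set.Ioo (0:ℝ) ε ∈ nhdsWithin (0:ℝ) (Set.Ioi 0) :=
      Ioo_mem_nhdsGT_of_mem ⟨le_refl 0, hε⟩
    obtain ⟨r, hr1, hr2⟩ := (hev.and (eventually_of_mem h2 fun _ h => h)).exists
    have hne : (A ∩ C ∩ closedBall x r).Nonempty := by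
      apply nonempty_of_measure_ne_zero (μ := volume)
      intro h0
      rw [h0, ENNReal.zero_div] at hr1
      exact hc2pos.ne' (le_antisymm hr1 zero_le)
    obtain ⟨y, hy⟩ := hne
    exact ⟨y, hy.1, le_trans (mem_closedBall.mp hy.2) hr2.2.le⟩
  have H : ∀ k : ℕ, ∃ y, y ∈ A ∩ C ∧ dist y x ≤ 1/(k+1 : ℝ) := fun k => hfreq _ (by positivity)
  choose u hu1 hu2 using H
  refine ⟨u, hu1, ?_⟩
  rw [tendsto_iff_dist_tendsto_zero]
  exact squeeze_zero (fun k => dist_nonneg) hu2 tendsto_one_div_add_atTop_nhds_zero_nat
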